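/- For every positive integer n, the complete graph K_{3n} has maximum matching width at most n; in particular, every graph on at most 6 vertices has maximum matching width at most 2. -/

import Mathlib

open SimpleGraph

/-- Size of a maximum matching in the bipartite graph of edges of `G` crossing `(A, Aᶜ)`. -/
noncomputable def mmVal {V : Type*} (G : SimpleGraph V) (A : Set V) : ℕ :=
  sSup {n | ∃ M : Finset (V × V),
    (∀ p ∈ M, p.1 ∈ A ∧ p.2 ∉ A ∧ G.Adj p.1 p.2) ∧
    (∀ p ∈ M, ∀ q ∈ M, p ≠ q → p.1 ≠ q.1 ∧ p.2 ≠ q.2) ∧ M.card = n}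

/-- A branch-decomposition over the vertex set of `G`: a finite subcubic tree together with a
bijection between its leaves and the vertices of `G`. -/
structure BranchDecomp {V : Type*} (G : SimpleGraph V) where
  B : Type
  finB : Finite B
  T : SimpleGraph B
  isTree : T.IsTree
  subcubic : ∀ b : B, (T.neighborSet b).ncard = 1 ∨ (T.neighborSet b).ncard = 3
  L : {b : B // (T.neighborSet b).ncard = 1} ≃ V

/-- The set of vertices of `G` whose leaves lie on the `u`-side of the tree edge `uw`. -/
noncomputable def BranchDecomp.side {V : Type*} {G : SimpleGraph V} (D : BranchDecomp G)
    (u w : D.B) : Set V :=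
  {x : V | (D.T.deleteEdges {s(u, w)}).Reachable (D.L.symm x).1 u}

/-- The width of a branch-decomposition is at most `k`. -/
def BranchDecomp.widthLE {V : Type*} {G : SimpleGraph V} (D : BranchDecomp G) (k : ℕ) : Prop :=
  ∀ u w : D.B, D.T.Adj u w → mmVal G (D.side u w) ≤ k

/-- The maximum matching width of `G`. -/
noncomputable def mmw {V : Type*} (G : SimpleGraph V) : ℕ :=
  sInf {k | ∃ D : BranchDecomp G, D.widthLE k}
/-- `H` is a minor of `G`: there is a family of nonempty, pairwise disjoint, connected branch
sets in `G` indexed by the vertices of `H`, with edges of `H` realized by edges of `G`. -/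
def IsMinor {W : Type*} {V : Type*} (H : SimpleGraph W) (G : SimpleGraph V) : Prop :=
  ∃ φ : W → Set V,
    (∀ w, (φ w).Nonempty) ∧
    (∀ w, (G.induce (φ w)).Connected) ∧
    (∀ w w', w ≠ w' → Disjoint (φ w) (φ w')) ∧
    (∀ w w', H.Adj w w' → ∃ a ∈ φ w, ∃ b ∈ φ w', G.Adj a b)

/-- The `k × k` grid graph: vertices `(i, j)`, edges between vertices at Manhattan distance 1. -/
def gridGraph (k : ℕ) : SimpleGraph (Fin k × Fin k) :=
  SimpleGraph.fromRel (fun p q =>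
    (p.1 = q.1 ∧ (p.2 : ℕ) + 1 = (q.2 : ℕ)) ∨ (p.2 = q.2 ∧ (p.1 : ℕ) + 1 = (q.1 : ℕ)))

/-- The row `R_j` of the `k × k` grid. -/
def gridRow (k : ℕ) (j : Fin k) : Set (Fin k × Fin k) := {p | p.2 = j}

/-- The column `C_i` of the `k × k` grid. -/
def gridCol (k : ℕ) (i : Fin k) : Set (Fin k × Fin k) := {p | p.1 = i}

/-- `X` is small: `mm(X) < k` and `X` contains no full row. -/
def GridSmall (k : ℕ) (X : Set (Fin k × Fin k)) : Prop :=
  mmVal (gridGraph k) X < k ∧ ∀ j : Fin k, ¬ gridRow k j ⊆ X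

/-- `G` is `k`-connected: `|V(G)| ≥ k` and deleting fewer than `k` vertices leaves `G`
connected. -/
def KConnected {V : Type*} (k : ℕ) (G : SimpleGraph V) : Prop :=
  k ≤ Nat.card V ∧ ∀ X : Set V, X.ncard < k → (G.induce Xᶜ).Connected

/-- A block of `G`: a bridge (with its two endpoints), or a maximal 2-connected induced
subgraph. -/
def IsBlock {V : Type*} (G : SimpleGraph V) (Bs : Set V) : Prop :=
  (∃ a b : V, G.Adj a b ∧ G.IsBridge s(a, b) ∧ Bs = {a, b}) ∨
  (KConnected 2 (G.induce Bs) ∧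
    ∀ B' : Set V, Bs ⊆ B' → KConnected 2 (G.induce B') → B' = Bs)

/-- A tree-representation of `G`: a finite subcubic tree `T` and nontrivial subtrees `F x`
for each vertex `x` such that adjacent vertices have intersecting subtrees. -/
structure TreeRep {V : Type*} (G : SimpleGraph V) where
  B : Type
  finB : Finite B
  T : SimpleGraph B
  isTree : T.IsTree
  subcubic : ∀ b : B, (T.neighborSet b).ncard = 1 ∨ (T.neighborSet b).ncard = 3
  F : V → Set B
  nontrivial : ∀ x : V, ∃ u w : B, u ∈ F x ∧ w ∈ F x ∧ T.Adj u w
  subtree : ∀ x : V, (T.induce (F x)).Connected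
  adjMeet : ∀ x y : V, G.Adj x y → (F x ∩ F y).Nonempty

/-- Every edge of the tree lies in at most `k` of the subtrees. -/
def TreeRep.widthLE {V : Type*} {G : SimpleGraph V} (R : TreeRep G) (k : ℕ) : Prop :=
  ∀ u w : R.B, R.T.Adj u w → {x : V | u ∈ R.F x ∧ w ∈ R.F x}.ncard ≤ k

/-- Contraction of the edge `uv` of `G` (the merged vertex is `u`). -/
def contractEdge {V : Type*} (G : SimpleGraph V) (u v : V) : SimpleGraph {x : V // x ≠ v} :=
  SimpleGraph.fromRel (fun x y =>
    G.Adj x.1 y.1 ∨ (x.1 = u ∧ G.Adj v y.1) ∨ (y.1 = u ∧ G.Adj v x.1))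

abbrev TB (k : ℕ) : Type := Option (Fin 3 × ((Fin (k+1) ⊕ Unit) ⊕ Fin (k+1)))

def tpar (k : ℕ) : TB k → Option (TB k)
  | none => none
  | some (j, Sum.inl (Sum.inl i)) => some (some (j, Sum.inr i))
  | some (j, Sum.inl (Sum.inr _)) => some (some (j, Sum.inr (Fin.last k)))
  | some (j, Sum.inr i) =>
      if h : (i : ℕ) = 0 then some none
      else some (some (j, Sum.inr ⟨(i : ℕ) - 1, by omega⟩))

def tht (k : ℕ) : TB k → ℕ
  | none => 0
  | some (_, Sum.inr i) => (i : ℕ) + 1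
  | some (_, Sum.inl (Sum.inl i)) => (i : ℕ) + 2
  | some (_, Sum.inl (Sum.inr _)) => k + 3

lemma tpar_tht {k : ℕ} {b a : TB k} (h : tpar k b = some a) : tht k a < tht k b := by
  rcases b with _ | ⟨j, (i | u) | i⟩ <;> simp [tpar] at h
  · subst h; simp [tht]
  · subst h; simp [tht, Fin.last]
  · split at h <;> simp at h <;> subst h <;> simp_all [tht] <;> exact Fin.pos_iff_ne_zero.mpr ‹_›

lemma tpar_eq_none {k : ℕ} {b : TB k} : tpar k b = none ↔ b = none := by
  rcases b with _ | ⟨j, (i | u) | i⟩ <;> simp [tpar]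
  split <;> simp

lemma tpar_some {k : ℕ} {b : TB k} (h : b ≠ none) : ∃ a, tpar k b = some a := by
  rcases hh : tpar k b with _ | a
  · exact absurd (tpar_eq_none.mp hh) h
  · exact ⟨a, rfl⟩

def TT (k : ℕ) : SimpleGraph (TB k) := SimpleGraph.fromRel (fun a b => tpar k b = some a)

lemma TT_adj {k : ℕ} {a b : TB k} :
    (TT k).Adj a b ↔ a ≠ b ∧ (tpar k b = some a ∨ tpar k a = some b) :=
  SimpleGraph.fromRel_adj _ a b

lemma tht_eq_zero {k : ℕ} {b : TB k} (h : tht k b = 0) : b = none := by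
  rcases b with _ | ⟨j, (i | u) | i⟩ <;> simp [tht] at h ⊢

lemma TT_reach_none_aux {k : ℕ} (n : ℕ) : ∀ b : TB k, tht k b ≤ n → (TT k).Reachable b none := by
  induction n with
  | zero => intro b hb; rw [tht_eq_zero (Nat.le_zero.mp hb)]
  | succ n ih =>
    intro b hb
    by_cases hbn : b = none
    · rw [hbn]
    · obtain ⟨a, ha⟩ := tpar_some hbn
      have hlt := tpar_tht ha
      have hadj : (TT k).Adj b a := TT_adj.mpr ⟨fun he => by rw [he] at hlt; exact lt_irrefl _ hlt, Or.inr ha⟩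
      exact hadj.reachable.trans (ih a (by omega))

lemma TT_conn {k : ℕ} : (TT k).Connected := by
  rw [connected_iff]
  exact ⟨fun a b => (TT_reach_none_aux (tht k a) a le_rfl).trans
    (TT_reach_none_aux (tht k b) b le_rfl).symm, ⟨none⟩⟩

def tdesc (k : ℕ) (c : TB k) : Set (TB k) :=
  {b | Relation.ReflTransGen (fun x y => tpar k y = some x) c b}

lemma tdesc_self {k : ℕ} (c : TB k) : c ∈ tdesc k c := Relation.ReflTransGen.refl

lemma tht_le_of_tdesc {k : ℕ} {c b : TB k} (h : b ∈ tdesc k c) : tht k c ≤ tht k b := by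
  induction h with
  | refl => exact le_rfl
  | tail _ step ih => exact le_trans ih (le_of_lt (tpar_tht step))

lemma tdesc_closed {k : ℕ} {c p b a : TB k} (hc : tpar k c = some p) (hb : b ∈ tdesc k c)
    (ha : ((TT k).deleteEdges {s(p, c)}).Adj b a) : a ∈ tdesc k c := by
  rw [SimpleGraph.deleteEdges_adj] at ha
  obtain ⟨hadj, hne⟩ := ha
  rw [TT_adj] at hadj
  obtain ⟨hne', h1 | h2⟩ := hadj
  · exact Relation.ReflTransGen.tail hb h1
  · by_cases hbc : b = c
    · subst hbc
      rw [hc, Option.some.injEq] at h2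
      exact absurd (h2 ▸ Sym2.eq_swap) hne
    · rcases Relation.ReflTransGen.cases_tail hb with h | ⟨m, hm, hstep⟩
      · exact absurd h hbc
      · rw [hstep, Option.some.injEq] at h2
        exact h2 ▸ hm

lemma walk_tdesc {k : ℕ} {c p : TB k} (hc : tpar k c = some p) {b x : TB k}
    (w : ((TT k).deleteEdges {s(p, c)}).Walk b x) (hb : b ∈ tdesc k c) : x ∈ tdesc k c := by
  induction w with
  | nil => exact hb
  | cons h w ih => exact ih (tdesc_closed hc hb h)

lemma reach_tdesc {k : ℕ} {c p : TB k} (hc : tpar k c = some p) {x : TB k}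
    (h : ((TT k).deleteEdges {s(p, c)}).Reachable x c) : x ∈ tdesc k c := by
  obtain ⟨w⟩ := h.symm
  exact walk_tdesc hc w (tdesc_self c)

lemma notdesc_reach_aux {k : ℕ} {c p : TB k} (hc : tpar k c = some p) (n : ℕ) :
    ∀ b : TB k, tht k b ≤ n → b ∉ tdesc k c →
      ((TT k).deleteEdges {s(p, c)}).Reachable b none := by
  induction n with
  | zero => intro b hb _; rw [tht_eq_zero (Nat.le_zero.mp hb)]
  | succ n ih =>
    intro b hb hbd
    by_cases hbn : b = none
    · rw [hbn]
    · obtain ⟨a, ha⟩ := tpar_some hbn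
      have hlt := tpar_tht ha
      have had : a ∉ tdesc k c := fun h => hbd (Relation.ReflTransGen.tail h ha)
      have hnec : s(b, a) ∉ ({s(p, c)} : Set (Sym2 (TB k))) := by
        intro hmem
        rw [Set.mem_singleton_iff, Sym2.eq_iff] at hmem
        rcases hmem with ⟨h1, h2⟩ | ⟨h1, h2⟩
        · subst h1; subst h2
          have := tpar_tht hc
          have := tpar_tht ha
          omega
        · exact hbd (h1 ▸ tdesc_self c)
      have hadj : ((TT k).deleteEdges {s(p, c)}).Adj b a := by
        rw [SimpleGraph.deleteEdges_adj]
        exact ⟨TT_adj.mpr ⟨fun he => by rw [he] at hlt; exact lt_irrefl _ hlt, Or.inr ha⟩, hnec⟩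
      exact hadj.reachable.trans (ih a (by omega) had)

lemma notdesc_reach {k : ℕ} {c p : TB k} (hc : tpar k c = some p) {b : TB k}
    (hbd : b ∉ tdesc k c) : ((TT k).deleteEdges {s(p, c)}).Reachable b p := by
  have hp : p ∉ tdesc k c := fun h => by
    have := tht_le_of_tdesc h; have := tpar_tht hc; omega
  exact (notdesc_reach_aux hc _ b le_rfl hbd).trans
    (notdesc_reach_aux hc _ p le_rfl hp).symm

lemma not_reach_cp {k : ℕ} {c p : TB k} (hc : tpar k c = some p) :
    ¬ ((TT k).deleteEdges {s(p, c)}).Reachable c p := by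
  intro h
  have : p ∈ tdesc k c := reach_tdesc hc h.symm
  have := tht_le_of_tdesc this
  have := tpar_tht hc
  omega

lemma TT_acyclic {k : ℕ} : (TT k).IsAcyclic := by
  rw [isAcyclic_iff_forall_edge_isBridge]
  intro e he
  induction e with
  | _ a b =>
    rw [SimpleGraph.mem_edgeSet] at he
    rw [SimpleGraph.isBridge_iff]
    rcases TT_adj.mp he with ⟨hne, h1 | h2⟩
    · -- tpar b = some a : c = b, p = a, edge s(a,b) = s(p,c)
      exact fun h => not_reach_cp h1 h.symm
    · -- tpar a = some b : c = a, p = b, edge s(b,a)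
      rw [show s(a, b) = s(b, a) from Sym2.eq_swap]
      exact not_reach_cp h2

lemma TT_isTree {k : ℕ} : (TT k).IsTree := ⟨TT_conn, TT_acyclic⟩

lemma nbhd_leaf1 {k : ℕ} {j : Fin 3} {i : Fin (k+1)} :
    (TT k).neighborSet (some (j, Sum.inl (Sum.inl i))) = {some (j, Sum.inr i)} := by
  ext a
  simp only [SimpleGraph.mem_neighborSet, TT_adj, Set.mem_singleton_iff]
  constructor
  · rintro ⟨hne, h | h⟩
    · rcases a with _ | ⟨j', (i' | u) | i'⟩ <;> simp [tpar] at h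
      split at h <;> simp at h
    · simp [tpar] at h
      exact h.symm
  · rintro rfl
    exact ⟨by simp, Or.inr (by simp [tpar])⟩

lemma nbhd_leaf2 {k : ℕ} {j : Fin 3} {u : Unit} :
    (TT k).neighborSet (some (j, Sum.inl (Sum.inr u))) = {some (j, Sum.inr (Fin.last k))} := by
  ext a
  simp only [SimpleGraph.mem_neighborSet, TT_adj, Set.mem_singleton_iff]
  constructor
  · rintro ⟨hne, h | h⟩
    · rcases a with _ | ⟨j', (i' | u') | i'⟩ <;> simp [tpar] at h
      split at h <;> simp at h
    · simp [tpar] at h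
      exact h.symm
  · rintro rfl
    exact ⟨by simp, Or.inr (by simp [tpar])⟩

lemma nbhd_center {k : ℕ} :
    (TT k).neighborSet (none : TB k) =
      {some (0, Sum.inr 0), some (1, Sum.inr 0), some (2, Sum.inr 0)} := by
  ext a
  simp only [SimpleGraph.mem_neighborSet, TT_adj, Set.mem_insert_iff, Set.mem_singleton_iff]
  constructor
  · rintro ⟨hne, h | h⟩
    · rcases a with _ | ⟨j', (i' | u') | i'⟩ <;> simp [tpar] at h
      have : i' = (0 : Fin (k+1)) := by
        apply Fin.ext; simpa using h
      subst this
      fin_cases j' <;> simp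
    · simp [tpar] at h
  · rintro (rfl | rfl | rfl) <;>
      exact ⟨by simp, Or.inl (by simp [tpar])⟩

lemma nbhd_spine {k : ℕ} {j : Fin 3} {i : Fin (k+1)} :
    ((TT k).neighborSet (some (j, Sum.inr i))).ncard = 3 := by
  set P : TB k := if (i : ℕ) = 0 then none
    else some (j, Sum.inr ⟨(i : ℕ) - 1, Nat.lt_of_le_of_lt (Nat.sub_le _ _) i.isLt⟩) with hP
  set X : TB k := if h : (i : ℕ) < k then some (j, Sum.inr ⟨(i : ℕ) + 1, by omega⟩)
    else some (j, Sum.inl (Sum.inr ())) with hX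
  rw [Set.ncard_eq_three]
  refine ⟨P, some (j, Sum.inl (Sum.inl i)), X, ?_, ?_, ?_, ?_⟩
  · by_cases h0 : (i : ℕ) = 0 <;> simp [hP, h0]
  · rw [hP, hX]; split_ifs with h0 hk hk <;> simp [Fin.ext_iff] <;> omega
  · by_cases hk : (i : ℕ) < k <;> simp [hX, hk]
  · ext a
    simp only [SimpleGraph.mem_neighborSet, TT_adj, Set.mem_insert_iff, Set.mem_singleton_iff]
    constructor
    · rintro ⟨hne, h | h⟩
      · -- tpar a = some (spine (j,i))
        rcases a with _ | ⟨j', (i' | u') | i'⟩ <;> simp [tpar] at h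
        · -- leaf inl: h : j' = j ∧ i' = i
          obtain ⟨rfl, rfl⟩ := h
          right; left; rfl
        · -- leaf inr: h : j' = j ∧ Fin.last k = i
          obtain ⟨rfl, hlast⟩ := h
          right; right
          have hik : ¬ (i : ℕ) < k := by
            rw [← hlast]; simp [Fin.last]
          simp [hX, hik]
        · -- spine: dite
          by_cases h0 : (i' : ℕ) = 0 <;> simp [← Fin.val_eq_zero_iff, h0] at h
          obtain ⟨rfl, hval⟩ := h
          right; right
          have hik : (i : ℕ) < k := by
            have := i'.isLt
            have : ((⟨(i' : ℕ) - 1, _⟩ : Fin (k+1)) : ℕ) = (i : ℕ) := congrArg Fin.val hval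
            simp at this
            omega
          simp [hX, hik]
          apply Fin.ext
          have : ((⟨(i' : ℕ) - 1, _⟩ : Fin (k+1)) : ℕ) = (i : ℕ) := congrArg Fin.val hval
          simp at this ⊢
          omega
      · -- tpar (spine (j,i)) = some a : a = P
        left
        by_cases h0 : (i : ℕ) = 0 <;> simp [tpar, h0] at h <;> simp [hP, h0, ← h]
    · rintro (rfl | rfl | rfl)
      · by_cases h0 : (i : ℕ) = 0
        · refine ⟨by simp [hP, h0], Or.inr ?_⟩
          simp [hP, tpar, h0]
        · refine ⟨by simp [hP, h0, Fin.ext_iff]; omega, Or.inr ?_⟩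
          simp [hP, tpar, h0]
      · exact ⟨by simp, Or.inl (by simp [tpar])⟩
      · by_cases hk : (i : ℕ) < k
        · refine ⟨by simp [hX, hk, Fin.ext_iff], Or.inl ?_⟩
          rw [hX, dif_pos hk]; rfl
        · refine ⟨by simp [hX, hk], Or.inl ?_⟩
          have : (i : ℕ) = k := by have := i.isLt; omega
          simp [hX, hk, tpar, Fin.last, Fin.ext_iff, this]

lemma nbhd_ncard {k : ℕ} (b : TB k) :
    ((TT k).neighborSet b).ncard = 1 ∨ ((TT k).neighborSet b).ncard = 3 := by
  rcases b with _ | ⟨j, (i | u) | i⟩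
  · right; rw [nbhd_center, Set.ncard_eq_three]
    exact ⟨_, _, _, by simp, by simp, by simp [Fin.ext_iff], rfl⟩
  · left; rw [nbhd_leaf1]; exact Set.ncard_singleton _
  · left; rw [nbhd_leaf2]; exact Set.ncard_singleton _
  · right; exact nbhd_spine

lemma ncard_one_iff {k : ℕ} {b : TB k} :
    ((TT k).neighborSet b).ncard = 1 ↔ ∃ j x, b = some (j, Sum.inl x) := by
  constructor
  · intro h
    rcases b with _ | ⟨j, (i | u) | i⟩
    · rw [nbhd_center, Set.ncard_eq_three.mpr
        ⟨_, _, _, by simp, by simp, by simp [Fin.ext_iff], rfl⟩] at h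
      omega
    · exact ⟨j, Sum.inl i, rfl⟩
    · exact ⟨j, Sum.inr u, rfl⟩
    · rw [nbhd_spine] at h; omega
  · rintro ⟨j, (i | u), rfl⟩
    · rw [nbhd_leaf1]; exact Set.ncard_singleton _
    · rw [nbhd_leaf2]; exact Set.ncard_singleton _

def leafMap (k : ℕ) (y : Fin 3 × (Fin (k+1) ⊕ Unit)) :
    {b : TB k // ((TT k).neighborSet b).ncard = 1} :=
  ⟨some (y.1, Sum.inl y.2), ncard_one_iff.mpr ⟨y.1, y.2, rfl⟩⟩

lemma leafMap_bij (k : ℕ) : Function.Bijective (leafMap k) := by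
  constructor
  · intro a b h
    have := congrArg Subtype.val h
    simp [leafMap] at this
    exact Prod.ext this.1 this.2
  · rintro ⟨b, hb⟩
    obtain ⟨j, x, rfl⟩ := ncard_one_iff.mp hb
    exact ⟨(j, x), rfl⟩

lemma card_leaves (k : ℕ) :
    Nat.card {b : TB k // ((TT k).neighborSet b).ncard = 1} = 3 * (k + 2) := by
  rw [← Nat.card_eq_of_bijective _ (leafMap_bij k)]
  simp [Nat.card_eq_fintype_card]

lemma tdesc_arm {k : ℕ} {j : Fin 3} {z} {b : TB k} (h : b ∈ tdesc k (some (j, z))) :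
    ∃ y, b = some (j, y) := by
  induction h with
  | refl => exact ⟨z, rfl⟩
  | @tail b' c' hb step ih =>
    obtain ⟨y, rfl⟩ := ih
    rcases c' with _ | ⟨j', (i' | u') | i'⟩ <;> simp [tpar] at step
    · exact ⟨_, by rw [step.1]⟩
    · exact ⟨_, by rw [step.1]⟩
    · by_cases h0 : (i' : ℕ) = 0 <;> simp [← Fin.val_eq_zero_iff, h0] at step
      exact ⟨_, by rw [step.1]⟩

lemma mmVal_nonempty {V : Type*} (G : SimpleGraph V) (A : Set V) :
    (0 : ℕ) ∈ {n | ∃ M : Finset (V × V),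
      (∀ p ∈ M, p.1 ∈ A ∧ p.2 ∉ A ∧ G.Adj p.1 p.2) ∧
      (∀ p ∈ M, ∀ q ∈ M, p ≠ q → p.1 ≠ q.1 ∧ p.2 ≠ q.2) ∧ M.card = n} :=
  ⟨∅, by simp⟩

lemma mmVal_le_ncard {V : Type*} [Finite V] (G : SimpleGraph V) (A : Set V) :
    mmVal G A ≤ A.ncard := by
  classical
  apply csSup_le ⟨0, mmVal_nonempty G A⟩
  rintro n ⟨M, h1, h2, rfl⟩
  have hA : A.Finite := Set.toFinite A
  rw [Set.ncard_eq_toFinset_card A hA]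
  have : M.card = (M.image Prod.fst).card := by
    rw [Finset.card_image_of_injOn]
    intro p hp q hq hpq
    by_contra hne
    exact (h2 p hp q hq hne).1 hpq
  rw [this]
  apply Finset.card_le_card
  intro x hx
  simp only [Finset.mem_image] at hx
  obtain ⟨p, hp, rfl⟩ := hx
  exact hA.mem_toFinset.mpr (h1 p hp).1

lemma mmVal_le_ncard_compl {V : Type*} [Finite V] (G : SimpleGraph V) (A : Set V) :
    mmVal G A ≤ Aᶜ.ncard := by
  classical
  apply csSup_le ⟨0, mmVal_nonempty G A⟩
  rintro n ⟨M, h1, h2, rfl⟩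
  have hA : Aᶜ.Finite := Set.toFinite _
  rw [Set.ncard_eq_toFinset_card _ hA]
  have : M.card = (M.image Prod.snd).card := by
    rw [Finset.card_image_of_injOn]
    intro p hp q hq hpq
    by_contra hne
    exact (h2 p hp q hq hne).2 hpq
  rw [this]
  apply Finset.card_le_card
  intro x hx
  simp only [Finset.mem_image] at hx
  obtain ⟨p, hp, rfl⟩ := hx
  exact hA.mem_toFinset.mpr (h1 p hp).2.1

lemma mmw_le_of_small {V : Type*} [Finite V] (G : SimpleGraph V) (c : ℕ)
    (h : Nat.card V ≤ 2 * c + 1) : mmw G ≤ c := by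
  have hA : ∀ A : Set V, mmVal G A ≤ c := by
    intro A
    have h1 := mmVal_le_ncard G A
    have h2 := mmVal_le_ncard_compl G A
    have h3 := Set.ncard_add_ncard_compl A (Set.toFinite A) (Set.toFinite _)
    omega
  by_cases hS : ∃ kk : ℕ, kk ∈ {k | ∃ D : BranchDecomp G, D.widthLE k}
  · obtain ⟨kk, D, _⟩ := hS
    exact Nat.sInf_le ⟨D, fun u w _ => hA _⟩
  · have : {k | ∃ D : BranchDecomp G, D.widthLE k} = ∅ := by
      ext x; simp only [Set.mem_empty_iff_false, iff_false]
      exact fun hx => hS ⟨x, hx⟩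
    rw [mmw, this, Nat.sInf_empty]
    exact Nat.zero_le _

lemma count_desc {V : Type*} [Finite V] (k : ℕ)
    (L : {b : TB k // ((TT k).neighborSet b).ncard = 1} ≃ V) {j : Fin 3}
    {z : (Fin (k+1) ⊕ Unit) ⊕ Fin (k+1)} :
    {x : V | (L.symm x).1 ∈ tdesc k (some (j, z))}.ncard ≤ k + 2 := by
  classical
  set g : (Fin (k+1) ⊕ Unit) → V :=
    fun l => L ⟨some (j, Sum.inl l), ncard_one_iff.mpr ⟨j, l, rfl⟩⟩ with hg
  have hsub : {x : V | (L.symm x).1 ∈ tdesc k (some (j, z))} ⊆ Set.range g := by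
    intro x hx
    obtain ⟨y, hy⟩ := tdesc_arm hx
    obtain ⟨j', l, hl⟩ := ncard_one_iff.mp (L.symm x).2
    rw [hl] at hy
    simp only [Option.some.injEq, Prod.mk.injEq] at hy
    obtain ⟨rfl, rfl⟩ := hy
    refine ⟨l, ?_⟩
    have hval : L.symm x = ⟨some (j', Sum.inl l), ncard_one_iff.mpr ⟨j', l, rfl⟩⟩ :=
      Subtype.ext hl
    rw [hg]
    conv_rhs => rw [← L.apply_symm_apply x, hval]
  refine le_trans (Set.ncard_le_ncard hsub (Set.toFinite _)) ?_
  rw [← Set.image_univ]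
  refine le_trans (Set.ncard_image_le (Set.toFinite _)) ?_
  rw [Set.ncard_univ]
  simp [Nat.card_eq_fintype_card]

lemma exists_decomp {V : Type*} [Finite V] (G : SimpleGraph V) (k : ℕ)
    (h : Nat.card V = 3 * (k + 2)) : mmw G ≤ k + 2 := by
  obtain ⟨L⟩ : Nonempty ({b : TB k // ((TT k).neighborSet b).ncard = 1} ≃ V) :=
    ⟨(Finite.equivFinOfCardEq (card_leaves k)).trans (Finite.equivFinOfCardEq h).symm⟩
  apply Nat.sInf_le
  refine ⟨⟨TB k, inferInstance, TT k, TT_isTree, nbhd_ncard, L⟩, ?_⟩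
  intro u w hadj
  rcases TT_adj.mp hadj with ⟨hne, h1 | h2⟩
  · -- tpar w = some u : u is parent, w is child
    have hwn : w ≠ none := fun he => by rw [he] at h1; simp [tpar] at h1
    obtain ⟨j, z, rfl⟩ : ∃ j z, w = some (j, z) := by
      rcases w with _ | ⟨j, z⟩
      · exact absurd rfl hwn
      · exact ⟨j, z, rfl⟩
    refine le_trans (mmVal_le_ncard_compl G _) ?_
    refine le_trans (Set.ncard_le_ncard ?_ (Set.toFinite _)) (count_desc k L (j:=j) (z:=z))
    intro x hx
    simp only [Set.mem_compl_iff, BranchDecomp.side, Set.mem_setOf_eq] at hx ⊢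
    by_contra hnd
    exact hx (notdesc_reach h1 hnd)
  · -- tpar u = some w : u is child
    have hun : u ≠ none := fun he => by rw [he] at h2; simp [tpar] at h2
    obtain ⟨j, z, rfl⟩ : ∃ j z, u = some (j, z) := by
      rcases u with _ | ⟨j, z⟩
      · exact absurd rfl hun
      · exact ⟨j, z, rfl⟩
    refine le_trans (mmVal_le_ncard G _) ?_
    refine le_trans (Set.ncard_le_ncard ?_ (Set.toFinite _)) (count_desc k L (j:=j) (z:=z))
    intro x hx
    simp only [BranchDecomp.side, Set.mem_setOf_eq] at hx ⊢
    rw [show s(some (j, z), w) = s(w, some (j, z)) from Sym2.eq_swap] at hx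
    exact reach_tdesc h2 hx

/-- `mmw(K_{3n}) ≤ n`; in particular any graph on at most 6 vertices has
mm-width at most 2. -/
theorem mmw_complete_le :
    (∀ n : ℕ, 0 < n → mmw (completeGraph (Fin (3 * n))) ≤ n) ∧
    (∀ (W : Type) [Finite W] (G : SimpleGraph W), Nat.card W ≤ 6 → mmw G ≤ 2) := by
  constructor
  · intro n hn
    by_cases hn1 : n = 1
    · subst hn1
      exact mmw_le_of_small _ 1 (by simp [Nat.card_eq_fintype_card])
    · have hcard : Nat.card (Fin (3 * n)) = 3 * (n - 2 + 2) := by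
        simp [Nat.card_eq_fintype_card]
        omega
      have := exists_decomp (completeGraph (Fin (3 * n))) (n - 2) hcard
      have heq : n - 2 + 2 = n := by omega
      rwa [heq] at this
  · intro W _ G hW
    by_cases h6 : Nat.card W = 6
    · have := exists_decomp G 0 (by omega)
      simpa using this
    · exact mmw_le_of_small G 2 (by omega)
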